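/- Let T be a Borel automorphism of an uncountable standard Borel space (X, 𝓑). Then there exists a map f : [0,1] → Aut(X, 𝓑) with f(0) = id, f(1) = T, which is continuous against all non-atomic measures: for every non-atomic Borel probability measure μ on X and every t₀ ∈ [0,1], μ(E(f(t), f(t₀))) → 0 as t → t₀. (Path-connectedness of the quotient group Aut₀(X, 𝓑) = Aut(X, 𝓑)/Ctbl(X) in the quotient uniform topology τ₀.) -/

import Mathlib

open MeasureTheory Set
open scoped ENNReal

/-- `T` is a Borel automorphism: both `T` and its inverse are measurable. -/
def IsBorelAuto {X : Type*} [MeasurableSpace X] (T : Equiv.Perm X) : Prop :=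
  Measurable T ∧ Measurable T.symm

/-- The set on which `S` and `T` (or their inverses) differ. -/
def Eset {X : Type*} (S T : Equiv.Perm X) : Set X :=
  {x | S x ≠ T x} ∪ {x | S⁻¹ x ≠ T⁻¹ x}

open scoped Classical

namespace BorelPathAux

variable {X : Type*}

lemma iter_apply_symm_iter (T : Equiv.Perm X) (n : ℕ) (x : X) :
    (⇑T)^[n] ((⇑T.symm)^[n] x) = x :=
  (Function.LeftInverse.iterate T.apply_symm_apply n) x

lemma symm_iter_apply_iter (T : Equiv.Perm X) (n : ℕ) (x : X) :
    (⇑T.symm)^[n] ((⇑T)^[n] x) = x :=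
  (Function.LeftInverse.iterate T.symm_apply_apply n) x

lemma iter_cancel (T : Equiv.Perm X) {a b : ℕ} (hab : a ≤ b) (x : X) :
    (⇑T)^[a] ((⇑T.symm)^[b] x) = (⇑T.symm)^[b - a] x := by
  conv_lhs => rw [show b = a + (b - a) by omega, Function.iterate_add_apply]
  exact iter_apply_symm_iter T a _

/-- Number of backward steps to the start of the `A`-run of `x` (0 if none). -/
noncomputable def escN (T : Equiv.Perm X) (A : Set X) (x : X) : ℕ :=
  if h : ∃ j : ℕ, (⇑T.symm)^[j + 1] x ∉ A then Nat.find h else 0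

/-- `T` switched on on `A`, with wrap-around at the ends of runs. -/
noncomputable def wrapFun (T : Equiv.Perm X) (A : Set X) (x : X) : X :=
  if x ∈ A then (if T x ∈ A then T x else (⇑T.symm)^[escN T A x] x) else x

lemma wrap_wrap (T : Equiv.Perm X) (A : Set X)
    (hok : ∀ x ∈ A, T x ∉ A → ∃ j : ℕ, (⇑T.symm)^[j + 1] x ∉ A) (x : X) :
    wrapFun T.symm A (wrapFun T A x) = x := by
  by_cases hx : x ∈ A
  · by_cases hTx : T x ∈ A
    · have hin : wrapFun T A x = T x := by rw [wrapFun, if_pos hx, if_pos hTx]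
      rw [hin, wrapFun, if_pos hTx,
        if_pos (show T.symm (T x) ∈ A by rwa [Equiv.symm_apply_apply])]
      exact Equiv.symm_apply_apply T x
    · have h := hok x hx hTx
      have hesc : (⇑T.symm)^[Nat.find h + 1] x ∉ A := Nat.find_spec h
      set J := Nat.find h with hJdef
      have hstay : ∀ i ≤ J, (⇑T.symm)^[i] x ∈ A := by
        intro i hi
        rcases Nat.eq_zero_or_pos i with rfl | hip
        · simpa using hx
        · by_contra hcon
          exact Nat.find_min h (show i - 1 < J by omega)
            (by rw [show i - 1 + 1 = i by omega]; exact hcon)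
      have hNx : escN T A x = J := by rw [escN, dif_pos h]
      set y := (⇑T.symm)^[J] x with hy
      have hin : wrapFun T A x = y := by rw [wrapFun, if_pos hx, if_neg hTx, hNx]
      rw [hin]
      have hyA : y ∈ A := hstay J le_rfl
      have hy2 : T.symm y ∉ A := by
        have : T.symm y = (⇑T.symm)^[J + 1] x := (Function.iterate_succ_apply' _ J x).symm
        rw [this]; exact hesc
      have hTJ1 : (⇑T)^[J + 1] y = T x := by
        rw [hy, show J + 1 = 1 + J by omega, Function.iterate_add_apply,
          iter_apply_symm_iter T J x, Function.iterate_one]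
      have hex' : ∃ j : ℕ, (⇑T.symm.symm)^[j + 1] y ∉ A := by
        refine ⟨J, ?_⟩
        simp only [Equiv.symm_symm]
        rw [hTJ1]; exact hTx
      have hKJ : escN T.symm A y = J := by
        rw [escN, dif_pos hex']
        refine le_antisymm (Nat.find_le (by simp only [Equiv.symm_symm]; rw [hTJ1]; exact hTx)) ?_
        by_contra hlt
        push_neg at hlt
        have hKspec : (⇑T.symm.symm)^[Nat.find hex' + 1] y ∉ A := Nat.find_spec hex'
        have hK1 : Nat.find hex' + 1 ≤ J := by omega
        have hcone : (⇑T)^[Nat.find hex' + 1] y = (⇑T.symm)^[J - (Nat.find hex' + 1)] x :=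
          iter_cancel T hK1 x
        refine hKspec ?_
        simp only [Equiv.symm_symm]
        rw [hcone]
        exact hstay _ (by omega)
      rw [wrapFun, if_pos hyA, if_neg hy2, hKJ]
      simp only [Equiv.symm_symm]
      exact iter_apply_symm_iter T J x
  · have hin : wrapFun T A x = x := by rw [wrapFun, if_neg hx]
    rw [hin, wrapFun, if_neg hx]

/-- The wrap permutation. -/
noncomputable def wrapPerm (T : Equiv.Perm X) (A : Set X)
    (hok : ∀ x ∈ A, T x ∉ A → ∃ j : ℕ, (⇑T.symm)^[j + 1] x ∉ A)
    (hok' : ∀ x ∈ A, T.symm x ∉ A → ∃ j : ℕ, (⇑T)^[j + 1] x ∉ A) : Equiv.Perm X where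
  toFun := wrapFun T A
  invFun := wrapFun T.symm A
  left_inv := wrap_wrap T A hok
  right_inv := by
    have h2 : ∀ x ∈ A, T.symm x ∉ A → ∃ j : ℕ, (⇑T.symm.symm)^[j + 1] x ∉ A := by
      simpa using hok'
    have := wrap_wrap T.symm A h2
    intro x; simpa using this x

lemma wrapPerm_coe (T : Equiv.Perm X) (A : Set X) (hok hok') :
    ⇑(wrapPerm T A hok hok') = wrapFun T A := rfl

lemma wrapPerm_inv_coe (T : Equiv.Perm X) (A : Set X) (hok hok') :
    ⇑(wrapPerm T A hok hok')⁻¹ = wrapFun T.symm A := rfl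


lemma measurable_wrapFun [MeasurableSpace X] (T : Equiv.Perm X) (A : Set X)
    (hTm : Measurable ⇑T) (hTm' : Measurable ⇑T.symm) (hA : MeasurableSet A) :
    Measurable (wrapFun T A) := by
  have hiter : ∀ n : ℕ, Measurable ((⇑T.symm)^[n]) := fun n => hTm'.iterate n
  set p : ℕ → X → Prop := fun n x => (⇑T.symm)^[n + 1] x ∉ A ∨ ∀ j : ℕ, (⇑T.symm)^[j + 1] x ∈ A
    with hp
  have htot : ∀ x, ∃ n, p n x := by
    intro x
    by_cases h : ∃ j : ℕ, (⇑T.symm)^[j + 1] x ∉ A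
    · obtain ⟨j, hj⟩ := h; exact ⟨j, Or.inl hj⟩
    · push_neg at h; exact ⟨0, Or.inr h⟩
  have hescN : ∀ x, escN T A x = Nat.find (htot x) := by
    intro x
    by_cases h : ∃ j : ℕ, (⇑T.symm)^[j + 1] x ∉ A
    · rw [escN, dif_pos h]
      refine le_antisymm ?_ (Nat.find_le (Or.inl (Nat.find_spec h)))
      rcases Nat.find_spec (htot x) with hesc | hstay
      · exact Nat.find_le hesc
      · exact absurd h (by push_neg; exact fun j => hstay j)
    · rw [escN, dif_neg h]
      push_neg at h
      exact ((Nat.find_eq_zero (htot x)).mpr (Or.inr h)).symm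
  have hps : ∀ n, MeasurableSet {x | p n x} := by
    intro n
    have h1 : MeasurableSet ((⇑T.symm)^[n + 1] ⁻¹' Aᶜ) := (hiter (n + 1)) hA.compl
    have h2 : MeasurableSet (⋂ j : ℕ, (⇑T.symm)^[j + 1] ⁻¹' A) :=
      MeasurableSet.iInter fun j => (hiter (j + 1)) hA
    have : {x | p n x} = ((⇑T.symm)^[n + 1] ⁻¹' Aᶜ) ∪ ⋂ j : ℕ, (⇑T.symm)^[j + 1] ⁻¹' A := by
      ext x; simp [hp]
    rw [this]; exact h1.union h2
  have hmain : Measurable fun x => (⇑T.symm)^[escN T A x] x := by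
    have hfind := Measurable.find (f := fun n (x : X) => (⇑T.symm)^[n] x) (p := p)
      (fun n => hiter n) hps htot
    have : (fun x => (⇑T.symm)^[escN T A x] x) = fun x => (⇑T.symm)^[Nat.find (htot x)] x :=
      funext fun x => by rw [hescN x]
    rw [this]; exact hfind
  exact Measurable.ite hA (Measurable.ite (hTm hA) hTm hmain) measurable_id


lemma exists_halfpow_lt {r : ℝ} (h : 0 < r) : ∃ k : ℕ, (1/2 : ℝ) ^ (k + 1) < r := by
  obtain ⟨n, hn⟩ := exists_pow_lt_of_lt_one h (by norm_num : (1/2 : ℝ) < 1)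
  exact ⟨n, lt_of_le_of_lt
    (pow_le_pow_of_le_one (by norm_num) (by norm_num) (Nat.le_succ n)) hn⟩

noncomputable def psiE (ψ : X → ℝ) (x : X) : ℝ≥0∞ := ENNReal.ofReal (ψ x)

noncomputable def LL (g : X → X) (ψ : X → ℝ) (x : X) : ℝ≥0∞ :=
  ⨆ N : ℕ, ⨅ m : ℕ, psiE ψ (g^[N + m] x)

noncomputable def dOne (g : X → X) (ψ : X → ℝ) (x : X) : ℝ≥0∞ :=
  (LL g ψ x - psiE ψ x) + (psiE ψ x - LL g ψ x)

noncomputable def dd (T : Equiv.Perm X) (ψ : X → ℝ) (x : X) : ℝ≥0∞ :=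
  min (dOne ⇑T ψ x) (dOne ⇑T.symm ψ x)

noncomputable def lev (T : Equiv.Perm X) (ψ : X → ℝ) (x : X) : ℕ :=
  if h : 0 < (dd T ψ x).toReal then Nat.find (exists_halfpow_lt h) else 0

noncomputable def theta (T : Equiv.Perm X) (ψ : X → ℝ) (x : X) : ℝ :=
  if 0 < (dd T ψ x).toReal then
    1 - (1/2) ^ (lev T ψ x + 1) + (1/2) ^ (lev T ψ x + 2) * ψ x
  else ψ x / 4

lemma psiE_pos {ψ : X → ℝ} (hψ : ∀ x, ψ x ∈ Set.Ioo (0:ℝ) 1) (x : X) : 0 < psiE ψ x :=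
  ENNReal.ofReal_pos.mpr (hψ x).1

lemma psiE_le_one {ψ : X → ℝ} (hψ : ∀ x, ψ x ∈ Set.Ioo (0:ℝ) 1) (x : X) : psiE ψ x ≤ 1 := by
  rw [psiE]
  exact ENNReal.ofReal_le_one.mpr (hψ x).2.le

lemma psiE_inj {ψ : X → ℝ} (hψ : ∀ x, ψ x ∈ Set.Ioo (0:ℝ) 1)
    (hinj : Function.Injective ψ) : Function.Injective (psiE ψ) := by
  intro a b h
  apply hinj
  have := congrArg ENNReal.toReal h
  rwa [psiE, psiE, ENNReal.toReal_ofReal (hψ a).1.le, ENNReal.toReal_ofReal (hψ b).1.le] at this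

lemma iSup_shift (f : ℕ → ℝ≥0∞) (hmono : Monotone f) : ⨆ N, f (N + 1) = ⨆ N, f N :=
  le_antisymm (iSup_le fun N => le_iSup f (N + 1))
    (iSup_le fun N => le_trans (hmono (Nat.le_succ N)) (le_iSup (fun N => f (N + 1)) N))

lemma LL_I_mono (g : X → X) (ψ : X → ℝ) (x : X) :
    Monotone fun N => ⨅ m : ℕ, psiE ψ (g^[N + m] x) := by
  intro a b hab
  refine le_iInf fun m => iInf_le_of_le (b - a + m) (le_of_eq ?_)
  rw [show a + (b - a + m) = b + m by omega]

lemma LL_shift (g : X → X) (ψ : X → ℝ) (x : X) : LL g ψ (g x) = LL g ψ x := by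
  have h1 : ∀ N : ℕ, (⨅ m : ℕ, psiE ψ (g^[N + m] (g x))) = ⨅ m : ℕ, psiE ψ (g^[(N + 1) + m] x) := by
    intro N
    refine iInf_congr fun m => ?_
    rw [show N + 1 + m = (N + m) + 1 by omega, Function.iterate_succ_apply]
  rw [LL, LL]
  calc (⨆ N : ℕ, ⨅ m : ℕ, psiE ψ (g^[N + m] (g x)))
      = ⨆ N : ℕ, ⨅ m : ℕ, psiE ψ (g^[(N + 1) + m] x) := by exact iSup_congr h1
    _ = ⨆ N : ℕ, ⨅ m : ℕ, psiE ψ (g^[N + m] x) := iSup_shift _ (LL_I_mono g ψ x)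

lemma inv_iterate {α β : Type*} (F : α → α) (L : α → β) (h : ∀ y, L (F y) = L y) :
    ∀ (n : ℕ) (y : α), L (F^[n] y) = L y := by
  intro n
  induction n with
  | zero => intro y; rfl
  | succ k ih => intro y; rw [Function.iterate_succ_apply, ih (F y), h y]

lemma LL_perm_symm (T : Equiv.Perm X) (ψ : X → ℝ) (x : X) :
    LL ⇑T ψ (T.symm x) = LL ⇑T ψ x := by
  conv_rhs => rw [← Equiv.apply_symm_apply T x, LL_shift]

lemma LL_symm_perm (T : Equiv.Perm X) (ψ : X → ℝ) (x : X) :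
    LL ⇑T.symm ψ (T x) = LL ⇑T.symm ψ x := by
  conv_rhs => rw [← Equiv.symm_apply_apply T x, LL_shift]

lemma LL_le_one {ψ : X → ℝ} (hψ : ∀ x, ψ x ∈ Set.Ioo (0:ℝ) 1) (g : X → X) (x : X) :
    LL g ψ x ≤ 1 :=
  iSup_le fun N => le_trans (iInf_le _ 0) (psiE_le_one hψ _)

lemma LL_ne_top {ψ : X → ℝ} (hψ : ∀ x, ψ x ∈ Set.Ioo (0:ℝ) 1) (g : X → X) (x : X) :
    LL g ψ x ≠ ⊤ :=
  ((LL_le_one hψ g x).trans_lt ENNReal.one_lt_top).ne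

lemma LL_freq {ψ : X → ℝ} (hψ : ∀ x, ψ x ∈ Set.Ioo (0:ℝ) 1) (g : X → X) (x : X)
    {ε : ℝ≥0∞} (hε : 0 < ε) (N : ℕ) :
    ∃ m : ℕ, psiE ψ (g^[N + m] x) < LL g ψ x + ε := by
  have hle : (⨅ m : ℕ, psiE ψ (g^[N + m] x)) ≤ LL g ψ x := by
    rw [LL]; exact le_iSup (fun N => ⨅ m : ℕ, psiE ψ (g^[N + m] x)) N
  exact iInf_lt_iff.mp (lt_of_le_of_lt hle (ENNReal.lt_add_right (LL_ne_top hψ g x) hε.ne'))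

lemma LL_ev {ψ : X → ℝ} (hψ : ∀ x, ψ x ∈ Set.Ioo (0:ℝ) 1) (g : X → X) (x : X)
    {ε : ℝ≥0∞} (hε : 0 < ε) :
    ∃ N : ℕ, ∀ m : ℕ, LL g ψ x - ε < psiE ψ (g^[N + m] x) := by
  by_cases hle : LL g ψ x ≤ ε
  · exact ⟨0, fun m => by rw [tsub_eq_zero_of_le hle]; exact psiE_pos hψ _⟩
  · push_neg at hle
    have h1 : LL g ψ x - ε < LL g ψ x :=
      ENNReal.sub_lt_self (LL_ne_top hψ g x) (lt_trans hε hle).ne' hε.ne'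
    conv_rhs at h1 => rw [LL]
    obtain ⟨N, hN⟩ := lt_iSup_iff.mp h1
    exact ⟨N, fun m => lt_of_lt_of_le hN (iInf_le _ m)⟩

lemma dOne_le {g : X → X} {ψ : X → ℝ} {x : X} {ε : ℝ≥0∞}
    (h1 : psiE ψ x ≤ LL g ψ x + ε) (h2 : LL g ψ x ≤ psiE ψ x + ε) :
    dOne g ψ x ≤ ε + ε := by
  refine add_le_add ?_ ?_
  · rw [tsub_le_iff_right, add_comm]; exact h2
  · rw [tsub_le_iff_right, add_comm]; exact h1

lemma dOne_eq_zero_iff (g : X → X) (ψ : X → ℝ) (x : X) :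
    dOne g ψ x = 0 ↔ psiE ψ x = LL g ψ x := by
  rw [dOne, add_eq_zero, tsub_eq_zero_iff_le, tsub_eq_zero_iff_le]
  exact ⟨fun ⟨h1, h2⟩ => le_antisymm h2 h1, fun h => ⟨h.ge, h.le⟩⟩

section ThetaFacts
variable (T : Equiv.Perm X) {ψ : X → ℝ}

lemma lev_spec {x : X} (h : 0 < (dd T ψ x).toReal) :
    (1/2 : ℝ) ^ (lev T ψ x + 1) < (dd T ψ x).toReal := by
  have hlev : lev T ψ x = Nat.find (exists_halfpow_lt h) := by rw [lev, dif_pos h]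
  rw [hlev]
  exact Nat.find_spec (exists_halfpow_lt h)

lemma theta_mem (hψ : ∀ x, ψ x ∈ Set.Ioo (0:ℝ) 1) (x : X) :
    theta T ψ x ∈ Set.Ioo (0:ℝ) 1 := by
  rw [theta]; split_ifs with h
  · constructor
    · have h1 : ((1:ℝ)/2) ^ (lev T ψ x + 1) ≤ (1/2 : ℝ) ^ 1 :=
        pow_le_pow_of_le_one (by norm_num) (by norm_num) (by omega)
      have h2 : 0 < ((1:ℝ)/2) ^ (lev T ψ x + 2) * ψ x :=
        mul_pos (by positivity) (hψ x).1
      norm_num at h1 ⊢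
      nlinarith
    · have hp : (0:ℝ) < (1/2 : ℝ) ^ (lev T ψ x + 2) := by positivity
      have h2 : ((1:ℝ)/2) ^ (lev T ψ x + 2) * ψ x < (1/2 : ℝ) ^ (lev T ψ x + 2) := by
        nlinarith [(hψ x).2]
      have h3 : ((1:ℝ)/2) ^ (lev T ψ x + 2) ≤ (1/2 : ℝ) ^ (lev T ψ x + 1) :=
        pow_le_pow_of_le_one (by norm_num) (by norm_num) (by omega)
      linarith
  · constructor
    · linarith [(hψ x).1]
    · linarith [(hψ x).2]

lemma theta_lt_of_lev_lt (hψ : ∀ x, ψ x ∈ Set.Ioo (0:ℝ) 1) {x y : X}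
    (hdx : 0 < (dd T ψ x).toReal) (hdy : 0 < (dd T ψ y).toReal)
    (hxy : lev T ψ x < lev T ψ y) : theta T ψ x < theta T ψ y := by
  rw [theta, if_pos hdx, theta, if_pos hdy]
  have h1 : ((1:ℝ)/2) ^ (lev T ψ x + 2) * ψ x < (1/2 : ℝ) ^ (lev T ψ x + 2) := by
    have : (0:ℝ) < (1/2 : ℝ) ^ (lev T ψ x + 2) := by positivity
    nlinarith [(hψ x).2]
  have h2 : ((1:ℝ)/2) ^ (lev T ψ y + 1) ≤ (1/2 : ℝ) ^ (lev T ψ x + 2) :=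
    pow_le_pow_of_le_one (by norm_num) (by norm_num) (by omega)
  have h3 : 0 < ((1:ℝ)/2) ^ (lev T ψ y + 2) * ψ y := mul_pos (by positivity) (hψ y).1
  have h4 : ((1:ℝ)/2) ^ (lev T ψ x + 2) = (1/2 : ℝ) ^ (lev T ψ x + 1) * (1/2) := pow_succ _ _
  linarith

lemma theta_inj (hψ : ∀ x, ψ x ∈ Set.Ioo (0:ℝ) 1) (hinj : Function.Injective ψ) :
    Function.Injective (theta T ψ) := by
  intro x y h
  by_cases hdx : 0 < (dd T ψ x).toReal <;> by_cases hdy : 0 < (dd T ψ y).toReal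
  · rcases lt_trichotomy (lev T ψ x) (lev T ψ y) with hl | hl | hl
    · exact absurd h (ne_of_lt (theta_lt_of_lev_lt T hψ hdx hdy hl))
    · apply hinj
      rw [theta, if_pos hdx, theta, if_pos hdy, hl] at h
      have hp : (0:ℝ) < (1/2 : ℝ) ^ (lev T ψ y + 2) := by positivity
      have : ((1:ℝ)/2) ^ (lev T ψ y + 2) * ψ x = (1/2 : ℝ) ^ (lev T ψ y + 2) * ψ y := by
        linarith
      exact mul_left_cancel₀ hp.ne' this
    · exact absurd h (ne_of_gt (theta_lt_of_lev_lt T hψ hdy hdx hl))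
  · exfalso
    rw [theta, if_pos hdx, theta, if_neg hdy] at h
    have h1 : ((1:ℝ)/2) ^ (lev T ψ x + 1) ≤ (1/2 : ℝ) ^ 1 :=
      pow_le_pow_of_le_one (by norm_num) (by norm_num) (by omega)
    have h2 : 0 < ((1:ℝ)/2) ^ (lev T ψ x + 2) * ψ x := mul_pos (by positivity) (hψ x).1
    have h3 := (hψ y).2
    norm_num at h1
    nlinarith
  · exfalso
    rw [theta, if_neg hdx, theta, if_pos hdy] at h
    have h1 : ((1:ℝ)/2) ^ (lev T ψ y + 1) ≤ (1/2 : ℝ) ^ 1 :=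
      pow_le_pow_of_le_one (by norm_num) (by norm_num) (by omega)
    have h2 : 0 < ((1:ℝ)/2) ^ (lev T ψ y + 2) * ψ y := mul_pos (by positivity) (hψ y).1
    have h3 := (hψ x).2
    norm_num at h1
    nlinarith
  · rw [theta, if_neg hdx, theta, if_neg hdy] at h
    exact hinj (by linarith)

lemma theta_gt {x : X} {ε : ℝ} (h0 : 0 < (dd T ψ x).toReal)
    (hlt : (dd T ψ x).toReal < ε) (hψ : ∀ x, ψ x ∈ Set.Ioo (0:ℝ) 1) :
    1 - ε < theta T ψ x := by
  rw [theta, if_pos h0]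
  have hspec := lev_spec T h0
  have h2 : 0 < ((1:ℝ)/2) ^ (lev T ψ x + 2) * ψ x := mul_pos (by positivity) (hψ x).1
  linarith

lemma measurable_theta [MeasurableSpace X] (hTm : Measurable ⇑T) (hTm' : Measurable ⇑T.symm)
    (hψm : Measurable ψ) : Measurable (theta T ψ) := by
  have hpsiE : Measurable (psiE ψ) := ENNReal.measurable_ofReal.comp hψm
  have hLL : ∀ g : X → X, Measurable g → Measurable (LL g ψ) := fun g hg =>
    Measurable.iSup fun N => Measurable.iInf fun m => hpsiE.comp (hg.iterate _)
  have hdOne : ∀ g : X → X, Measurable g → Measurable (dOne g ψ) := fun g hg =>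
    ((hLL g hg).sub hpsiE).add (hpsiE.sub (hLL g hg))
  have hddr : Measurable fun x => (dd T ψ x).toReal :=
    ((hdOne _ hTm).min (hdOne _ hTm')).ennreal_toReal
  have hpos : MeasurableSet {x | 0 < (dd T ψ x).toReal} :=
    measurableSet_lt measurable_const hddr
  have hlev : Measurable (lev T ψ) := by
    apply measurable_to_countable'
    intro k
    have : lev T ψ ⁻¹' {k} =
        ((if k = 0 then {x | ¬ 0 < (dd T ψ x).toReal} else ∅) ∪
          ({x | (1/2 : ℝ) ^ (k + 1) < (dd T ψ x).toReal} ∩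
            ⋂ i ∈ Finset.range k, {x | ¬ ((1/2 : ℝ) ^ (i + 1) < (dd T ψ x).toReal)})) := by
      ext x
      simp only [mem_preimage, mem_singleton_iff, mem_union, mem_inter_iff, mem_setOf_eq,
        mem_iInter, Finset.mem_range]
      by_cases hd : 0 < (dd T ψ x).toReal
      · have hlev : lev T ψ x = Nat.find (exists_halfpow_lt hd) := by rw [lev, dif_pos hd]
        rw [hlev]
        constructor
        · intro hk
          subst hk
          refine Or.inr ⟨Nat.find_spec (exists_halfpow_lt hd), fun i hi => Nat.find_min _ hi⟩
        · rintro (hbad | ⟨h1, h2⟩)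
          · split_ifs at hbad with hk
            · exact absurd hd hbad
            · exact absurd hbad (notMem_empty x)
          · exact le_antisymm (Nat.find_le h1) ((Nat.le_find_iff _ _).mpr h2)
      · have hlev : lev T ψ x = 0 := by rw [lev, dif_neg hd]
        rw [hlev]
        constructor
        · intro hk
          subst hk
          simp only [if_pos rfl]
          exact Or.inl hd
        · rintro (hbad | ⟨h1, h2⟩)
          · split_ifs at hbad with hk
            · omega
            · exact absurd hbad (notMem_empty x)
          · exact absurd h1 (fun hlt => hd (lt_trans (by positivity) hlt))
    rw [this]
    refine MeasurableSet.union ?_ (MeasurableSet.inter (measurableSet_lt measurable_const hddr) ?_)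
    · split_ifs
      · simpa [Set.compl_setOf] using hpos.compl
      · exact MeasurableSet.empty
    · exact MeasurableSet.iInter fun i => MeasurableSet.iInter fun _ =>
        (by simpa [Set.compl_setOf] using (measurableSet_lt measurable_const hddr).compl :
          MeasurableSet {x | ¬ ((1/2 : ℝ) ^ (i + 1) < (dd T ψ x).toReal)})
  have hp1 : Measurable fun x => ((1:ℝ)/2) ^ (lev T ψ x + 1) :=
    (measurable_from_top (f := fun k : ℕ => ((1:ℝ)/2) ^ (k + 1))).comp hlev
  have hp2 : Measurable fun x => ((1:ℝ)/2) ^ (lev T ψ x + 2) :=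
    (measurable_from_top (f := fun k : ℕ => ((1:ℝ)/2) ^ (k + 2))).comp hlev
  have hb1 : Measurable fun x => 1 - (1/2 : ℝ) ^ (lev T ψ x + 1) + (1/2 : ℝ) ^ (lev T ψ x + 2) * ψ x :=
    (measurable_const.sub hp1).add (hp2.mul hψm)
  exact Measurable.ite hpos hb1 (hψm.div_const 4)

end ThetaFacts

lemma pick3 {α : Type*} {a b c P Q : α} (h1 : a ≠ b) (h2 : a ≠ c) (h3 : b ≠ c) :
    (a ≠ P ∧ a ≠ Q) ∨ (b ≠ P ∧ b ≠ Q) ∨ (c ≠ P ∧ c ≠ Q) := by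
  by_contra h
  push_neg at h
  obtain ⟨hA, hB, hC⟩ := h
  by_cases haP : a = P
  · by_cases hbP : b = P
    · exact h1 (haP.trans hbP.symm)
    · have hbQ := hB hbP
      by_cases hcP : c = P
      · exact h2 (haP.trans hcP.symm)
      · exact h3 (hbQ.trans (hC hcP).symm)
  · have haQ := hA haP
    by_cases hbQ : b = Q
    · exact h1 (haQ.trans hbQ.symm)
    · have hbP : b = P := by by_contra hbP; exact hbQ (hB hbP)
      by_cases hcQ : c = Q
      · exact h2 (haQ.trans hcQ.symm)
      · have hcP : c = P := by by_contra hcP; exact hcQ (hC hcP)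
        exact h3 (hbP.trans hcP.symm)

lemma ray_lemma (T : Equiv.Perm X) {ψ : X → ℝ} (hψ : ∀ x, ψ x ∈ Set.Ioo (0:ℝ) 1)
    (hinj : Function.Injective ψ) (S : Equiv.Perm X)
    (hdle : ∀ y, dd T ψ y ≤ dOne ⇑S ψ y)
    (hLp : ∀ y, LL ⇑T ψ (S y) = LL ⇑T ψ y)
    (hLm : ∀ y, LL ⇑T.symm ψ (S y) = LL ⇑T.symm ψ y)
    (x : X) (hap : ∀ a b : ℕ, (⇑S)^[a] x = (⇑S)^[b] x → a = b)
    {s : ℝ} (hs : s < 1) :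
    ∃ n : ℕ, s ≤ theta T ψ ((⇑S)^[n + 1] x) := by
  set ε4 : ℝ≥0∞ := ENNReal.ofReal ((1 - s)/4) with hε4
  have hε4pos : 0 < ε4 := ENNReal.ofReal_pos.mpr (by linarith)
  obtain ⟨N₀, hN₀⟩ := LL_ev hψ (⇑S) x hε4pos
  have hlow : ∀ k : ℕ, N₀ ≤ k → LL ⇑S ψ x - ε4 < psiE ψ ((⇑S)^[k] x) := by
    intro k hk
    have := hN₀ (k - N₀)
    rwa [show N₀ + (k - N₀) = k by omega] at this
  have hLinv : ∀ k : ℕ, LL ⇑S ψ ((⇑S)^[k] x) = LL ⇑S ψ x :=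
    fun k => inv_iterate (⇑S) (LL ⇑S ψ) (LL_shift (⇑S) ψ) k x
  have hPinv : ∀ k : ℕ, LL ⇑T ψ ((⇑S)^[k] x) = LL ⇑T ψ x :=
    fun k => inv_iterate (⇑S) (LL ⇑T ψ) hLp k x
  have hQinv : ∀ k : ℕ, LL ⇑T.symm ψ ((⇑S)^[k] x) = LL ⇑T.symm ψ x :=
    fun k => inv_iterate (⇑S) (LL ⇑T.symm ψ) hLm k x
  have hsum : ε4 + ε4 = ENNReal.ofReal ((1 - s)/2) := by
    rw [hε4, ← ENNReal.ofReal_add (by linarith) (by linarith)]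
    congr 1; ring
  have main : ∀ k : ℕ, N₀ ≤ k → 1 ≤ k →
      psiE ψ ((⇑S)^[k] x) < LL ⇑S ψ x + ε4 →
      psiE ψ ((⇑S)^[k] x) ≠ LL ⇑T ψ x →
      psiE ψ ((⇑S)^[k] x) ≠ LL ⇑T.symm ψ x →
      ∃ n : ℕ, s ≤ theta T ψ ((⇑S)^[n + 1] x) := by
    intro k hkN hk1 hup hnP hnQ
    set y := (⇑S)^[k] x with hy
    have h1' : psiE ψ y ≤ LL ⇑S ψ y + ε4 := by rw [hLinv]; exact hup.le
    have h2' : LL ⇑S ψ y ≤ psiE ψ y + ε4 := by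
      rw [hLinv]
      by_cases hc : LL ⇑S ψ x ≤ ε4
      · exact le_trans hc (le_add_self)
      · calc LL ⇑S ψ x = (LL ⇑S ψ x - ε4) + ε4 :=
              (tsub_add_cancel_of_le (not_le.mp hc).le).symm
          _ ≤ psiE ψ y + ε4 := add_le_add (hlow k hkN).le le_rfl
    have hdlt : dd T ψ y ≤ ENNReal.ofReal ((1 - s)/2) := by
      rw [← hsum]; exact le_trans (hdle y) (dOne_le h1' h2')
    have hne_top : dd T ψ y ≠ ⊤ := ne_top_of_le_ne_top ENNReal.ofReal_ne_top hdlt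
    have hne0 : dd T ψ y ≠ 0 := by
      intro h0
      have : dOne ⇑T ψ y = 0 ∨ dOne ⇑T.symm ψ y = 0 := by
        rcases min_cases (dOne ⇑T ψ y) (dOne ⇑T.symm ψ y) with ⟨hmin, _⟩ | ⟨hmin, _⟩
        · exact Or.inl (by rw [dd, hmin] at h0; exact h0)
        · exact Or.inr (by rw [dd, hmin] at h0; exact h0)
      rcases this with h | h
      · exact hnP (by rw [← hPinv k]; exact (dOne_eq_zero_iff _ _ _).mp h)
      · exact hnQ (by rw [← hQinv k]; exact (dOne_eq_zero_iff _ _ _).mp h)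
    have htr_pos : 0 < (dd T ψ y).toReal := ENNReal.toReal_pos hne0 hne_top
    have htr_lt : (dd T ψ y).toReal < 1 - s := by
      have := ENNReal.toReal_le_of_le_ofReal (by linarith) hdlt
      linarith
    have := theta_gt T htr_pos htr_lt hψ
    refine ⟨k - 1, ?_⟩
    rw [show k - 1 + 1 = k by omega]
    linarith
  obtain ⟨m₁, hm₁⟩ := LL_freq hψ (⇑S) x hε4pos (N₀ + 1)
  obtain ⟨m₂, hm₂⟩ := LL_freq hψ (⇑S) x hε4pos (N₀ + 1 + m₁ + 1)
  obtain ⟨m₃, hm₃⟩ := LL_freq hψ (⇑S) x hε4pos (N₀ + 1 + m₁ + 1 + m₂ + 1)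
  set k₁ := N₀ + 1 + m₁ with hk₁
  set k₂ := N₀ + 1 + m₁ + 1 + m₂ with hk₂
  set k₃ := N₀ + 1 + m₁ + 1 + m₂ + 1 + m₃ with hk₃
  have hv12 : psiE ψ ((⇑S)^[k₁] x) ≠ psiE ψ ((⇑S)^[k₂] x) := by
    intro h
    have := hap _ _ (psiE_inj hψ hinj h)
    omega
  have hv13 : psiE ψ ((⇑S)^[k₁] x) ≠ psiE ψ ((⇑S)^[k₃] x) := by
    intro h
    have := hap _ _ (psiE_inj hψ hinj h)
    omega
  have hv23 : psiE ψ ((⇑S)^[k₂] x) ≠ psiE ψ ((⇑S)^[k₃] x) := by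
    intro h
    have := hap _ _ (psiE_inj hψ hinj h)
    omega
  rcases pick3 (P := LL ⇑T ψ x) (Q := LL ⇑T.symm ψ x) hv12 hv13 hv23 with h | h | h
  · exact main k₁ (by omega) (by omega) hm₁ h.1 h.2
  · exact main k₂ (by omega) (by omega) hm₂ h.1 h.2
  · exact main k₃ (by omega) (by omega) hm₃ h.1 h.2


lemma wrap_diff (S : Equiv.Perm X) (A B : Set X) (hAB : A ⊆ B) (x : X)
    (hd : wrapFun S A x ≠ wrapFun S B x) :
    (∃ n : ℕ, (∀ i ≤ n, (⇑S)^[i] x ∈ B) ∧ (⇑S)^[n] x ∉ A) ∨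
    (∃ n : ℕ, (∀ i ≤ n, (⇑S.symm)^[i] x ∈ B) ∧ (⇑S.symm)^[n] x ∉ A) := by
  by_cases hxB : x ∈ B
  swap
  · exfalso
    have hxA : x ∉ A := fun h => hxB (hAB h)
    rw [wrapFun, if_neg hxA, wrapFun, if_neg hxB] at hd
    exact hd rfl
  by_cases hxA : x ∈ A
  swap
  · exact Or.inl ⟨0, fun i hi => by simpa [Nat.le_zero.mp hi] using hxB, by simpa using hxA⟩
  by_cases hSxA : S x ∈ A
  · exfalso
    rw [wrapFun, if_pos hxA, if_pos hSxA, wrapFun, if_pos hxB, if_pos (hAB hSxA)] at hd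
    exact hd rfl
  by_cases hSxB : S x ∈ B
  · refine Or.inl ⟨1, fun i hi => ?_, by simpa using hSxA⟩
    interval_cases i
    · simpa using hxB
    · simpa using hSxB
  by_cases hEB : ∃ j : ℕ, (⇑S.symm)^[j + 1] x ∉ B
  · have hEA : ∃ j : ℕ, (⇑S.symm)^[j + 1] x ∉ A :=
      ⟨Nat.find hEB, fun h => Nat.find_spec hEB (hAB h)⟩
    have hle : Nat.find hEA ≤ Nat.find hEB :=
      Nat.find_mono fun n hn hA' => hn (hAB hA')
    have hne : Nat.find hEA ≠ Nat.find hEB := by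
      intro hEq
      rw [wrapFun, if_pos hxA, if_neg hSxA, wrapFun, if_pos hxB, if_neg hSxB,
        escN, dif_pos hEA, escN, dif_pos hEB, hEq] at hd
      exact hd rfl
    refine Or.inr ⟨Nat.find hEA + 1, fun i hi => ?_, Nat.find_spec hEA⟩
    rcases Nat.eq_zero_or_pos i with rfl | hip
    · simpa using hxB
    · by_contra hcon
      exact Nat.find_min hEB (show i - 1 < Nat.find hEB by omega)
        (by rw [show i - 1 + 1 = i by omega]; exact hcon)
  · have hEA : ∃ j : ℕ, (⇑S.symm)^[j + 1] x ∉ A := by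
      by_contra hEA
      rw [wrapFun, if_pos hxA, if_neg hSxA, wrapFun, if_pos hxB, if_neg hSxB,
        escN, dif_neg hEA, escN, dif_neg hEB] at hd
      exact hd rfl
    push_neg at hEB
    refine Or.inr ⟨Nat.find hEA + 1, fun i hi => ?_, Nat.find_spec hEA⟩
    rcases Nat.eq_zero_or_pos i with rfl | hip
    · simpa using hxB
    · have := hEB (i - 1)
      rwa [show i - 1 + 1 = i by omega] at this

/-- Points having a (one-sided) chain below level `t` reaching a point with level in `[s,t)`. -/
def Dset (T : Equiv.Perm X) (θ : X → ℝ) (s t : ℝ) : Set X :=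
  {x | (∃ n : ℕ, (∀ i ≤ n, θ ((⇑T)^[i] x) < t) ∧ s ≤ θ ((⇑T)^[n] x)) ∨
       (∃ n : ℕ, (∀ i ≤ n, θ ((⇑T.symm)^[i] x) < t) ∧ s ≤ θ ((⇑T.symm)^[n] x))}

lemma Dset_meas [MeasurableSpace X] (T : Equiv.Perm X) (θ : X → ℝ) (hθm : Measurable θ)
    (hTm : Measurable ⇑T) (hTm' : Measurable ⇑T.symm) (s t : ℝ) :
    MeasurableSet (Dset T θ s t) := by
  have m1 : ∀ g : X → X, Measurable g → ∀ n : ℕ,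
      MeasurableSet ((⋂ i : ℕ, ⋂ _ : i ≤ n, {x | θ (g^[i] x) < t}) ∩ {x | s ≤ θ (g^[n] x)}) := by
    intro g hg n
    refine MeasurableSet.inter ?_ ?_
    · exact MeasurableSet.iInter fun i => MeasurableSet.iInter fun _ =>
        measurableSet_lt (hθm.comp (hg.iterate i)) measurable_const
    · exact measurableSet_le measurable_const (hθm.comp (hg.iterate n))
  have : Dset T θ s t =
      (⋃ n : ℕ, ((⋂ i : ℕ, ⋂ _ : i ≤ n, {x | θ ((⇑T)^[i] x) < t}) ∩ {x | s ≤ θ ((⇑T)^[n] x)})) ∪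
      (⋃ n : ℕ, ((⋂ i : ℕ, ⋂ _ : i ≤ n, {x | θ ((⇑T.symm)^[i] x) < t}) ∩
        {x | s ≤ θ ((⇑T.symm)^[n] x)})) := by
    ext x
    simp only [Dset, mem_setOf_eq, mem_union, mem_iUnion, mem_inter_iff, mem_iInter]
  rw [this]
  exact (MeasurableSet.iUnion (m1 _ hTm)).union (MeasurableSet.iUnion (m1 _ hTm'))

lemma Dset_mono (T : Equiv.Perm X) (θ : X → ℝ) {s s' t t' : ℝ} (hs : s' ≤ s) (ht : t ≤ t') :
    Dset T θ s t ⊆ Dset T θ s' t' := by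
  intro x hx
  rcases hx with ⟨n, h1, h2⟩ | ⟨n, h1, h2⟩
  exacts [Or.inl ⟨n, fun i hi => lt_of_lt_of_le (h1 i hi) ht, le_trans hs h2⟩,
          Or.inr ⟨n, fun i hi => lt_of_lt_of_le (h1 i hi) ht, le_trans hs h2⟩]

lemma aperiodic_iter_inj (T : Equiv.Perm X) (x : X) (hap : ∀ m : ℕ, (⇑T)^[m + 1] x ≠ x) :
    ∀ a b : ℕ, (⇑T)^[a] x = (⇑T)^[b] x → a = b := by
  have key : ∀ a b : ℕ, a < b → (⇑T)^[a] x = (⇑T)^[b] x → False := by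
    intro a b hlt hab
    rw [show b = a + (b - a) by omega, Function.iterate_add_apply] at hab
    have h2 := (T.injective.iterate a) hab
    exact hap (b - a - 1) (by rw [show b - a - 1 + 1 = b - a by omega]; exact h2.symm)
  intro a b hab
  rcases lt_trichotomy a b with h | h | h
  · exact absurd hab fun hh => key a b h hh
  · exact h
  · exact absurd hab.symm fun hh => key b a h hh

lemma aperiodic_symm (T : Equiv.Perm X) (x : X) (hap : ∀ m : ℕ, (⇑T)^[m + 1] x ≠ x) :
    ∀ m : ℕ, (⇑T.symm)^[m + 1] x ≠ x := by
  intro m hm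
  have h2 := congrArg ((⇑T)^[m + 1]) hm
  rw [iter_apply_symm_iter] at h2
  exact hap m h2.symm

end BorelPathAux


/-- path-connectedness of `(Aut₀(X, 𝓑), τ₀)`. -/
theorem path_connected_quotient_uniform {X : Type*} [MeasurableSpace X]
    [StandardBorelSpace X] [Uncountable X]
    (T : Equiv.Perm X) (hT : IsBorelAuto T) :
    ∃ f : Set.Icc (0 : ℝ) 1 → Equiv.Perm X,
      (∀ t, IsBorelAuto (f t)) ∧
      f ⟨0, by norm_num⟩ = 1 ∧ f ⟨1, by norm_num⟩ = T ∧
      ∀ (μ : Measure X), IsProbabilityMeasure μ → (∀ x : X, μ {x} = 0) →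
        ∀ t₀ : Set.Icc (0 : ℝ) 1,
          Filter.Tendsto (fun t => μ (Eset (f t) (f t₀))) (nhds t₀) (nhds 0) := by
  classical
  open BorelPathAux in
  obtain ⟨e, he⟩ := exists_measurableEmbedding_real X
  set ψ : X → ℝ := fun x => Real.arctan (e x) / Real.pi + 1/2 with hψdef
  have hπ := Real.pi_pos
  have hψm : Measurable ψ :=
    ((Real.measurable_arctan.comp he.measurable).div_const _).add_const _
  have hψIoo : ∀ x, ψ x ∈ Set.Ioo (0:ℝ) 1 := by
    intro x
    have h1 := Real.arctan_lt_pi_div_two (e x)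
    have h2 := Real.neg_pi_div_two_lt_arctan (e x)
    have hu : Real.arctan (e x) / Real.pi < 1/2 := by
      rw [div_lt_iff₀ hπ]; linarith
    have hl : -(1/2 : ℝ) < Real.arctan (e x) / Real.pi := by
      rw [lt_div_iff₀ hπ]; linarith
    constructor <;> simp only [hψdef] <;> linarith
  have hψinj : Function.Injective ψ := by
    intro a b h
    simp only [hψdef] at h
    have h2 : Real.arctan (e a) = Real.arctan (e b) := by
      field_simp at h
      linarith
    exact he.injective (Real.arctan_injective h2)
  set θ : X → ℝ := theta T ψ with hθdef
  have hθIoo : ∀ x, θ x ∈ Set.Ioo (0:ℝ) 1 := theta_mem T hψIoo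
  have hθinj : Function.Injective θ := theta_inj T hψIoo hψinj
  have hθm : Measurable θ := measurable_theta T hT.1 hT.2 hψm
  set A : ℝ → Set X := fun s => {x | θ x < s} with hAdef
  have hAmono : ∀ {s t : ℝ}, s ≤ t → A s ⊆ A t := fun {s t} hst x hx => lt_of_lt_of_le hx hst
  have hAmeas : ∀ s, MeasurableSet (A s) := fun s => measurableSet_lt hθm measurable_const
  -- escape lemmas
  have hescape : ∀ (s : ℝ) (x : X), x ∈ A s → T x ∉ A s →
      ∃ j : ℕ, (⇑T.symm)^[j + 1] x ∉ A s := by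
    intro s x hx hTx
    by_cases hper : ∃ m : ℕ, (⇑T)^[m + 1] x = x
    · obtain ⟨m, hm⟩ := hper
      rcases Nat.eq_zero_or_pos m with rfl | hm1
      · exact absurd (show T x ∈ A s by
          rw [show T x = x from by simpa using hm]; exact hx) hTx
      · refine ⟨m - 1, ?_⟩
        have hTm : (⇑T.symm)^[m] x = T x := by
          have h2 : (⇑T)^[m] (T x) = x := by
            rw [← Function.iterate_succ_apply]; exact hm
          calc (⇑T.symm)^[m] x = (⇑T.symm)^[m] ((⇑T)^[m] (T x)) := by rw [h2]
            _ = T x := symm_iter_apply_iter T m (T x)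
        rw [show m - 1 + 1 = m by omega, hTm]
        exact hTx
    · push_neg at hper
      have hs1 : s < 1 := lt_of_le_of_lt (not_lt.mp hTx) (hθIoo (T x)).2
      obtain ⟨n, hn⟩ := ray_lemma T hψIoo hψinj T.symm (fun y => min_le_right _ _)
        (fun y => LL_perm_symm T ψ y) (fun y => LL_shift (⇑T.symm) ψ y) x
        (aperiodic_iter_inj T.symm x (aperiodic_symm T x hper)) hs1
      exact ⟨n, not_lt.mpr hn⟩
  have hescape' : ∀ (s : ℝ) (x : X), x ∈ A s → T.symm x ∉ A s →
      ∃ j : ℕ, (⇑T)^[j + 1] x ∉ A s := by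
    intro s x hx hTx
    by_cases hper : ∃ m : ℕ, (⇑T)^[m + 1] x = x
    · obtain ⟨m, hm⟩ := hper
      rcases Nat.eq_zero_or_pos m with rfl | hm1
      · refine absurd (show T.symm x ∈ A s by
          have hfix : T x = x := by simpa using hm
          rw [show T.symm x = x from by conv_lhs => rw [← hfix, Equiv.symm_apply_apply]]
          exact hx) hTx
      · refine ⟨m - 1, ?_⟩
        have hTm : (⇑T)^[m] x = T.symm x := by
          have h2 := congrArg T.symm hm
          rwa [Function.iterate_succ_apply', Equiv.symm_apply_apply] at h2
        rw [show m - 1 + 1 = m by omega, hTm]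
        exact hTx
    · push_neg at hper
      have hs1 : s < 1 := lt_of_le_of_lt (not_lt.mp hTx) (hθIoo (T.symm x)).2
      obtain ⟨n, hn⟩ := ray_lemma T hψIoo hψinj T (fun y => min_le_left _ _)
        (fun y => LL_shift (⇑T) ψ y) (fun y => LL_symm_perm T ψ y) x
        (aperiodic_iter_inj T x hper) hs1
      exact ⟨n, not_lt.mpr hn⟩
  set f : Set.Icc (0:ℝ) 1 → Equiv.Perm X := fun t =>
    wrapPerm T (A t.1) (hescape t.1) (hescape' t.1) with hfdef
  refine ⟨f, ?_, ?_, ?_, ?_⟩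
  · intro t
    constructor
    · exact measurable_wrapFun T (A t.1) hT.1 hT.2 (hAmeas _)
    · have := measurable_wrapFun T.symm (A t.1) hT.2 (by simpa using hT.1) (hAmeas _)
      exact this
  · apply Equiv.ext
    intro x
    have hx : x ∉ A 0 := by
      simp only [hAdef, mem_setOf_eq, not_lt]
      exact (hθIoo x).1.le
    show wrapFun T (A 0) x = _
    rw [wrapFun, if_neg hx]
    simp
  · apply Equiv.ext
    intro x
    show wrapFun T (A 1) x = T x
    rw [wrapFun, if_pos (show x ∈ A 1 from (hθIoo x).2),
      if_pos (show T x ∈ A 1 from (hθIoo (T x)).2)]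
  · intro μ hprob hatoms t₀
    haveI : NoAtoms μ := ⟨hatoms⟩
    rw [ENNReal.tendsto_nhds_zero]
    intro ε hε
    have hdiffD : ∀ u v : ℝ, u ≤ v → ∀ x : X,
        (wrapFun T (A u) x ≠ wrapFun T (A v) x ∨
         wrapFun T.symm (A u) x ≠ wrapFun T.symm (A v) x) →
        x ∈ Dset T θ u v := by
      intro u v huv x hx
      rcases hx with hx | hx
      · rcases wrap_diff T (A u) (A v) (hAmono huv) x hx with ⟨n, h1, h2⟩ | ⟨n, h1, h2⟩
        · exact Or.inl ⟨n, fun i hi => h1 i hi, not_lt.mp h2⟩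
        · exact Or.inr ⟨n, fun i hi => h1 i hi, not_lt.mp h2⟩
      · have h3 := wrap_diff T.symm (A u) (A v) (hAmono huv) x hx
        simp only [Equiv.symm_symm] at h3
        rcases h3 with ⟨n, h1, h2⟩ | ⟨n, h1, h2⟩
        · exact Or.inr ⟨n, fun i hi => h1 i hi, not_lt.mp h2⟩
        · exact Or.inl ⟨n, fun i hi => h1 i hi, not_lt.mp h2⟩
    have hEsetD : ∀ τ : Set.Icc (0:ℝ) 1,
        Eset (f τ) (f t₀) ⊆ Dset T θ (min τ.1 t₀.1) (max τ.1 t₀.1) := by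
      intro τ x hx
      have hx' : wrapFun T (A τ.1) x ≠ wrapFun T (A t₀.1) x ∨
          wrapFun T.symm (A τ.1) x ≠ wrapFun T.symm (A t₀.1) x := by
        rcases hx with hx | hx
        · exact Or.inl hx
        · exact Or.inr hx
      rcases le_total τ.1 t₀.1 with hor | hor
      · rw [min_eq_left hor, max_eq_right hor]
        exact hdiffD _ _ hor x hx'
      · rw [min_eq_right hor, max_eq_left hor]
        refine hdiffD _ _ hor x ?_
        rcases hx' with h | h
        · exact Or.inl (Ne.symm h)
        · exact Or.inr (Ne.symm h)
    rcases lt_or_eq_of_le t₀.2.2 with ht₀ | ht₀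
    · -- case t₀ < 1
      set δ₀ : ℝ := (1 - t₀.1)/2 with hδ₀def
      have hδ₀pos : 0 < δ₀ := by rw [hδ₀def]; linarith
      have hδ₀lt : t₀.1 + δ₀ < 1 := by rw [hδ₀def]; linarith
      have hδk : ∀ k : ℕ, (0:ℝ) < δ₀/2^k := fun k => by positivity
      have hδkle : ∀ k : ℕ, δ₀/2^k ≤ δ₀ := fun k =>
        div_le_self hδ₀pos.le (one_le_pow₀ (by norm_num))
      have hδmono : ∀ {k k' : ℕ}, k ≤ k' → δ₀/2^k' ≤ δ₀/2^k := by
        intro k k' hkk'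
        gcongr
        · norm_num
      set Dk : ℕ → Set X := fun k => Dset T θ (t₀.1 - δ₀/2^k) (t₀.1 + δ₀/2^k) with hDkdef
      have hanti : Antitone Dk := fun k k' hkk' =>
        Dset_mono T θ (by have := hδmono hkk'; linarith) (by have := hδmono hkk'; linarith)
      have hbound : ∀ S : Equiv.Perm X, (S = T ∨ S = T.symm) → ∀ x : X,
          ∃ b : ℕ, 1 ≤ b ∧ ∀ n : ℕ, (∀ i ≤ n, θ ((⇑S)^[i] x) < t₀.1 + δ₀) →
            ∃ m, m < b ∧ (⇑S)^[n] x = (⇑S)^[m] x := by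
        intro S hS x
        by_cases hper : ∃ p : ℕ, (⇑S)^[p + 1] x = x
        · obtain ⟨p, hp⟩ := hper
          refine ⟨p + 1, by omega, fun n _ => ⟨n % (p + 1), Nat.mod_lt _ (by omega), ?_⟩⟩
          conv_lhs => rw [show n = n % (p + 1) + (p + 1) * (n / (p + 1)) from (Nat.mod_add_div n (p + 1)).symm]
          rw [Function.iterate_add_apply, Function.iterate_mul, Function.iterate_fixed hp]
        · push_neg at hper
          have hray : ∃ n : ℕ, t₀.1 + δ₀ ≤ θ ((⇑S)^[n + 1] x) := by
            rcases hS with rfl | rfl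
            · exact ray_lemma S hψIoo hψinj S (fun y => min_le_left _ _)
                (fun y => LL_shift (⇑S) ψ y) (fun y => LL_symm_perm S ψ y) x
                (aperiodic_iter_inj S x hper) hδ₀lt
            · exact ray_lemma T hψIoo hψinj T.symm (fun y => min_le_right _ _)
                (fun y => LL_perm_symm T ψ y) (fun y => LL_shift (⇑T.symm) ψ y) x
                (aperiodic_iter_inj T.symm x hper) hδ₀lt
          obtain ⟨n₀, hn₀⟩ := hray
          refine ⟨n₀ + 2, by omega, fun n hchain => ⟨n, ?_, rfl⟩⟩
          by_contra hge
          push_neg at hge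
          exact absurd (hchain (n₀ + 1) (by omega)) (not_lt.mpr hn₀)
      have hdir : ∀ S : Equiv.Perm X, (S = T ∨ S = T.symm) → ∀ x : X,
          ({k : ℕ | ∃ n : ℕ, (∀ i ≤ n, θ ((⇑S)^[i] x) < t₀.1 + δ₀/2^k) ∧
            t₀.1 - δ₀/2^k ≤ θ ((⇑S)^[n] x)}).Infinite →
          ∃ n : ℕ, θ ((⇑S)^[n] x) = t₀.1 := by
        intro S hS x hinf
        obtain ⟨b, hb1, hb⟩ := hbound S hS x
        by_contra hno
        push_neg at hno
        have hFne : ((Finset.range b).image fun m => |θ ((⇑S)^[m] x) - t₀.1|).Nonempty :=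
          ⟨_, Finset.mem_image_of_mem _ (Finset.mem_range.mpr (show 0 < b by omega))⟩
        set ε' := ((Finset.range b).image fun m => |θ ((⇑S)^[m] x) - t₀.1|).min' hFne
          with hε'def
        have hε'pos : 0 < ε' := by
          obtain ⟨m, _, hmeq⟩ := Finset.mem_image.mp (Finset.min'_mem _ hFne)
          rw [hε'def, ← hmeq]
          exact abs_pos.mpr (sub_ne_zero.mpr (hno m))
        obtain ⟨K0, hK0⟩ : ∃ K0 : ℕ, δ₀/2^K0 < ε' := by
          obtain ⟨n0, hn0⟩ := exists_pow_lt_of_lt_one (div_pos hε'pos hδ₀pos)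
            (show (1/2 : ℝ) < 1 by norm_num)
          refine ⟨n0, ?_⟩
          have h2 : ((1:ℝ)/2)^n0 = 1/2^n0 := by rw [div_pow, one_pow]
          calc δ₀/2^n0 = δ₀ * ((1/2 : ℝ)^n0) := by rw [h2]; ring
            _ < δ₀ * (ε'/δ₀) := mul_lt_mul_of_pos_left hn0 hδ₀pos
            _ = ε' := by field_simp
        obtain ⟨k, hkmem, hkge⟩ : ∃ k, k ∈ {k : ℕ | ∃ n : ℕ,
            (∀ i ≤ n, θ ((⇑S)^[i] x) < t₀.1 + δ₀/2^k) ∧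
            t₀.1 - δ₀/2^k ≤ θ ((⇑S)^[n] x)} ∧ K0 ≤ k := by
          by_contra hcon
          push_neg at hcon
          exact hinf (Set.Finite.subset (Set.finite_Iio K0) fun k hk => hcon k hk)
        obtain ⟨n, hchain, hwit⟩ := hkmem
        have hdkK : δ₀/2^k ≤ δ₀/2^K0 := hδmono hkge
        have hchain' : ∀ i ≤ n, θ ((⇑S)^[i] x) < t₀.1 + δ₀ := fun i hi =>
          lt_of_lt_of_le (hchain i hi) (by linarith [hδkle k])
        obtain ⟨m, hmb, hmeq⟩ := hb n hchain'
        have hv1 : θ ((⇑S)^[m] x) < t₀.1 + δ₀/2^k := by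
          rw [← hmeq]; exact hchain n le_rfl
        have hv2 : t₀.1 - δ₀/2^k ≤ θ ((⇑S)^[m] x) := by rw [← hmeq]; exact hwit
        have habs : |θ ((⇑S)^[m] x) - t₀.1| < ε' :=
          abs_sub_lt_iff.mpr ⟨by linarith, by linarith⟩
        have hge : ε' ≤ |θ ((⇑S)^[m] x) - t₀.1| :=
          Finset.min'_le _ _ (Finset.mem_image_of_mem _ (Finset.mem_range.mpr hmb))
        exact absurd habs (not_lt.mpr hge)
      have hnull : μ (⋂ k, Dk k) = 0 := by
        have hCcnt : Set.Countable ({x : X | ∃ n : ℕ, θ ((⇑T)^[n] x) = t₀.1} ∪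
            {x : X | ∃ n : ℕ, θ ((⇑T.symm)^[n] x) = t₀.1}) := by
          have h1 : ∀ g : X → X, Function.Injective g →
              Set.Countable {x : X | ∃ n : ℕ, θ (g^[n] x) = t₀.1} := by
            intro g hg
            have hrw : {x : X | ∃ n : ℕ, θ (g^[n] x) = t₀.1} =
                ⋃ n : ℕ, g^[n] ⁻¹' {y | θ y = t₀.1} := by
              ext x; simp only [mem_setOf_eq, mem_iUnion, mem_preimage]
            rw [hrw]
            refine Set.countable_iUnion fun n => Set.Countable.preimage ?_ (hg.iterate n)
            exact Set.Subsingleton.countable fun a ha b hb => hθinj (ha.trans hb.symm)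
          exact (h1 ⇑T T.injective).union (h1 ⇑T.symm T.symm.injective)
        refine measure_mono_null ?_ (by haveI : NullSingletonClass μ := ⟨hatoms⟩; exact hCcnt.measure_zero μ)
        intro x hx
        simp only [mem_iInter] at hx
        have hsplit : ({k : ℕ | ∃ n : ℕ, (∀ i ≤ n, θ ((⇑T)^[i] x) < t₀.1 + δ₀/2^k) ∧
            t₀.1 - δ₀/2^k ≤ θ ((⇑T)^[n] x)}).Infinite ∨
            ({k : ℕ | ∃ n : ℕ, (∀ i ≤ n, θ ((⇑T.symm)^[i] x) < t₀.1 + δ₀/2^k) ∧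
            t₀.1 - δ₀/2^k ≤ θ ((⇑T.symm)^[n] x)}).Infinite := by
          by_contra hcon
          push_neg at hcon
          obtain ⟨h1, h2⟩ := hcon
          refine Set.infinite_univ (α := ℕ) (Set.Finite.subset (h1.union h2) fun k _ => ?_)
          exact (hx k).elim (fun h => Or.inl h) (fun h => Or.inr h)
        rcases hsplit with h | h
        · exact Or.inl (hdir T (Or.inl rfl) x h)
        · exact Or.inr (hdir T.symm (Or.inr rfl) x h)
      have hlim := tendsto_measure_iInter_atTop (μ := μ)
        (fun k => (Dset_meas T θ hθm hT.1 hT.2 _ _).nullMeasurableSet) hanti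
        ⟨0, measure_ne_top μ _⟩
      rw [hnull] at hlim
      obtain ⟨k, hk⟩ := (hlim.eventually_lt_const hε).exists
      have hev : {τ : Set.Icc (0:ℝ) 1 | |τ.1 - t₀.1| < δ₀/2^k} ∈ nhds t₀ := by
        have hcont : Continuous (fun τ : Set.Icc (0:ℝ) 1 => τ.1) := continuous_subtype_val
        have h2 : (fun τ : Set.Icc (0:ℝ) 1 => τ.1) ⁻¹' Metric.ball t₀.1 (δ₀/2^k) ∈ nhds t₀ :=
          (hcont.tendsto t₀) (Metric.ball_mem_nhds _ (hδk k))
        have hseteq : {τ : Set.Icc (0:ℝ) 1 | |τ.1 - t₀.1| < δ₀/2^k} =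
            (fun τ : Set.Icc (0:ℝ) 1 => τ.1) ⁻¹' Metric.ball t₀.1 (δ₀/2^k) := by
          ext τ; simp [Metric.mem_ball, Real.dist_eq, Subtype.dist_eq]
        rw [hseteq]; exact h2
      filter_upwards [hev] with τ hτ
      refine le_trans (measure_mono (subset_trans (hEsetD τ) (Dset_mono T θ ?_ ?_))) hk.le
      · have := abs_lt.mp hτ
        exact le_min (by linarith) (by linarith [hδk k])
      · have := abs_lt.mp hτ
        exact max_le (by linarith) (by linarith [hδk k])
    · -- case t₀ = 1
      set Wk : ℕ → Set X := fun k =>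
        {x | 1 - 1/(k+1 : ℝ) ≤ θ x} ∪ {x | 1 - 1/(k+1 : ℝ) ≤ θ (T x)} ∪
          {x | 1 - 1/(k+1 : ℝ) ≤ θ (T.symm x)} with hWkdef
      have hWmeas : ∀ k, MeasurableSet (Wk k) := fun k =>
        ((measurableSet_le measurable_const hθm).union
          (measurableSet_le measurable_const (hθm.comp hT.1))).union
          (measurableSet_le measurable_const (hθm.comp hT.2))
      have hWanti : Antitone Wk := by
        intro k k' hkk'
        have hle : 1 - 1/(k+1:ℝ) ≤ 1 - 1/(k'+1:ℝ) := by
          have h2 : 1/(k'+1:ℝ) ≤ 1/(k+1:ℝ) := by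
            apply one_div_le_one_div_of_le (by positivity)
            have : (k:ℝ) ≤ (k':ℝ) := by exact_mod_cast hkk'
            linarith
          linarith
        intro x hx
        rcases hx with (hx | hx) | hx
        · exact Or.inl (Or.inl (le_trans hle hx))
        · exact Or.inl (Or.inr (le_trans hle hx))
        · exact Or.inr (le_trans hle hx)
      have hWnull : μ (⋂ k, Wk k) = 0 := by
        have hempty : (⋂ k, Wk k) = ∅ := by
          ext x
          simp only [mem_iInter, mem_empty_iff_false, iff_false, not_forall]
          have hpos : 0 < min (1 - θ x) (min (1 - θ (T x)) (1 - θ (T.symm x))) := by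
            have h1 := (hθIoo x).2
            have h2 := (hθIoo (T x)).2
            have h3 := (hθIoo (T.symm x)).2
            simp only [lt_min_iff]
            exact ⟨by linarith, by linarith, by linarith⟩
          obtain ⟨k, hk⟩ := exists_nat_one_div_lt hpos
          simp only [lt_min_iff] at hk
          refine ⟨k, ?_⟩
          intro hmem
          simp only [hWkdef, mem_union, mem_setOf_eq] at hmem
          rcases hmem with (h | h) | h
          · linarith [hk.1]
          · linarith [hk.2.1]
          · linarith [hk.2.2]
        rw [hempty]; exact measure_empty
      have hlim := tendsto_measure_iInter_atTop (μ := μ)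
        (fun k => (hWmeas k).nullMeasurableSet) hWanti ⟨0, measure_ne_top μ _⟩
      rw [hWnull] at hlim
      obtain ⟨k, hk⟩ := (hlim.eventually_lt_const hε).exists
      have hft : ∀ x : X, wrapFun T (A t₀.1) x = T x := by
        intro x
        have hxA : x ∈ A t₀.1 := (hθIoo x).2.trans_eq ht₀.symm
        have hTxA : T x ∈ A t₀.1 := (hθIoo (T x)).2.trans_eq ht₀.symm
        rw [wrapFun, if_pos hxA, if_pos hTxA]
      have hft' : ∀ x : X, wrapFun T.symm (A t₀.1) x = T.symm x := by
        intro x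
        have hxA : x ∈ A t₀.1 := (hθIoo x).2.trans_eq ht₀.symm
        have hTxA : T.symm x ∈ A t₀.1 := (hθIoo (T.symm x)).2.trans_eq ht₀.symm
        rw [wrapFun, if_pos hxA, if_pos hTxA]
      have hev : {τ : Set.Icc (0:ℝ) 1 | |τ.1 - t₀.1| < 1/(k+1:ℝ)} ∈ nhds t₀ := by
        have hcont : Continuous (fun τ : Set.Icc (0:ℝ) 1 => τ.1) := continuous_subtype_val
        have h2 : (fun τ : Set.Icc (0:ℝ) 1 => τ.1) ⁻¹' Metric.ball t₀.1 (1/(k+1:ℝ)) ∈ nhds t₀ :=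
          (hcont.tendsto t₀) (Metric.ball_mem_nhds _ (by positivity))
        have hseteq : {τ : Set.Icc (0:ℝ) 1 | |τ.1 - t₀.1| < 1/(k+1:ℝ)} =
            (fun τ : Set.Icc (0:ℝ) 1 => τ.1) ⁻¹' Metric.ball t₀.1 (1/(k+1:ℝ)) := by
          ext τ; simp [Metric.mem_ball, Real.dist_eq, Subtype.dist_eq]
        rw [hseteq]; exact h2
      filter_upwards [hev] with τ hτ
      refine le_trans (measure_mono ?_) hk.le
      intro x hx
      have hτk : 1 - 1/(k+1:ℝ) ≤ τ.1 := by
        have h2 := abs_lt.mp hτ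
        rw [ht₀] at h2
        linarith [h2.1]
      rcases hx with hx | hx
      · have hx2 : wrapFun T (A τ.1) x ≠ T x := fun h => hx (h.trans (hft x).symm)
        by_cases hxA : x ∈ A τ.1
        · by_cases hTxA : T x ∈ A τ.1
          · exact absurd (by rw [wrapFun, if_pos hxA, if_pos hTxA]) hx2
          · exact Or.inl (Or.inr (le_trans hτk (not_lt.mp hTxA)))
        · exact Or.inl (Or.inl (le_trans hτk (not_lt.mp hxA)))
      · have hx2 : wrapFun T.symm (A τ.1) x ≠ T.symm x := fun h => hx (h.trans (hft' x).symm)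
        by_cases hxA : x ∈ A τ.1
        · by_cases hTxA : T.symm x ∈ A τ.1
          · exact absurd (by rw [wrapFun, if_pos hxA, if_pos hTxA]) hx2
          · exact Or.inr (le_trans hτk (not_lt.mp hTxA))
        · exact Or.inl (Or.inl (le_trans hτk (not_lt.mp hxA)))
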